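/- Let Φ: ℝ → ℝ be an l-Lipschitz function and let H be a set of functions from a set X to ℝ. Then the empirical Rademacher complexity of the composed class Φ ∘ H = {Φ ∘ h : h ∈ H} over a sample (x₁,...,x_m) satisfies R̂(Φ ∘ H) ≤ l · R̂(H), where R̂(H) = E_σ[ sup_{h∈H} (1/m) Σᵢ σᵢ h(xᵢ) ] and the σᵢ are independent Rademacher (±1 uniform) random variables. -/

import Mathlib

open Finset Pointwise

/-- Empirical Rademacher complexity of a class `H` over sample `x`. -/
noncomputable def Rhat {X : Type*} (m : ℕ) (x : Fin m → X) (H : Set (X → ℝ)) : ℝ :=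
  (1 / 2 ^ m) *
    ∑ σ : Fin m → Bool,
      sSup ((fun h : X → ℝ =>
        (1 / m : ℝ) * ∑ i, (if σ i then (1 : ℝ) else -1) * h (x i)) '' H)

lemma sSup_add_sSup_le' {A B : Set ℝ} (hA : A.Nonempty) (hB : B.Nonempty) {C : ℝ}
    (h : ∀ a ∈ A, ∀ b ∈ B, a + b ≤ C) : sSup A + sSup B ≤ C := by
  have h1 : sSup A ≤ C - sSup B := by
    apply csSup_le hA
    intro a ha
    have h2 : sSup B ≤ C - a := csSup_le hB (fun b hb => by linarith [h a ha b hb])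
    linarith
  linarith

lemma step_key' {X : Type*} {H : Set (X → ℝ)} (hH : H.Nonempty)
    (Φ : ℝ → ℝ) (l : ℝ) (hl : 0 ≤ l)
    (hΦ : ∀ a b : ℝ, |Φ a - Φ b| ≤ l * |a - b|)
    (c : ℝ) (u v : (X → ℝ) → ℝ)
    (hb1 : BddAbove ((fun h => u h + c * l * v h) '' H))
    (hb2 : BddAbove ((fun h => u h - c * l * v h) '' H)) :
    sSup ((fun h => u h + c * Φ (v h)) '' H) + sSup ((fun h => u h - c * Φ (v h)) '' H)
      ≤ sSup ((fun h => u h + c * l * v h) '' H) + sSup ((fun h => u h - c * l * v h) '' H) := by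
  apply sSup_add_sSup_le' (hH.image _) (hH.image _)
  rintro a ⟨h, hh, rfl⟩ b ⟨h', hh', rfl⟩
  dsimp only
  have key : c * Φ (v h) - c * Φ (v h') ≤ |c * l * (v h - v h')| := by
    calc c * Φ (v h) - c * Φ (v h') = c * (Φ (v h) - Φ (v h')) := by ring
      _ ≤ |c| * |Φ (v h) - Φ (v h')| := by rw [← abs_mul]; exact le_abs_self _
      _ ≤ |c| * (l * |v h - v h'|) := mul_le_mul_of_nonneg_left (hΦ _ _) (abs_nonneg c)
      _ = |c * l * (v h - v h')| := by rw [abs_mul, abs_mul, abs_of_nonneg hl]; ring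
  have expand : c * l * (v h - v h') = c * l * v h - c * l * v h' := by ring
  rcases abs_cases (c * l * (v h - v h')) with ⟨he, _⟩ | ⟨he, _⟩
  · have h1 : u h + c * l * v h ≤ sSup ((fun h => u h + c * l * v h) '' H) :=
      le_csSup hb1 ⟨h, hh, rfl⟩
    have h2 : u h' - c * l * v h' ≤ sSup ((fun h => u h - c * l * v h) '' H) :=
      le_csSup hb2 ⟨h', hh', rfl⟩
    rw [he, expand] at key
    linarith
  · have h1 : u h' + c * l * v h' ≤ sSup ((fun h => u h + c * l * v h) '' H) :=
      le_csSup hb1 ⟨h', hh', rfl⟩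
    have h2 : u h - c * l * v h ≤ sSup ((fun h => u h - c * l * v h) '' H) :=
      le_csSup hb2 ⟨h, hh, rfl⟩
    rw [he, expand] at key
    linarith

/-- Mixed class used in the coordinate-by-coordinate contraction argument. -/
noncomputable def gAux {X : Type*} (m : ℕ) (x : Fin m → X) (Φ : ℝ → ℝ) (l : ℝ)
    (S : Finset (Fin m)) (σ : Fin m → Bool) (h : X → ℝ) : ℝ :=
  (1 / m : ℝ) * ∑ i, (if σ i then (1 : ℝ) else -1) *
    (if i ∈ S then l * h (x i) else Φ (h (x i)))

lemma gAux_bdd {X : Type*} (m : ℕ) (x : Fin m → X) (H : Set (X → ℝ)) (Φ : ℝ → ℝ) (l : ℝ)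
    (hl0 : 0 ≤ l)
    (hbdd : ∀ σ : Fin m → Bool, BddAbove ((fun h : X → ℝ =>
      (1 / m : ℝ) * ∑ i, (if σ i then (1 : ℝ) else -1) * h (x i)) '' H))
    (hbddΦ : ∀ σ : Fin m → Bool, BddAbove ((fun h : X → ℝ =>
      (1 / m : ℝ) * ∑ i, (if σ i then (1 : ℝ) else -1) * Φ (h (x i))) '' H))
    (S : Finset (Fin m)) (σ : Fin m → Bool) :
    BddAbove (gAux m x Φ l S σ '' H) := by
  classical
  obtain ⟨M1, hM1⟩ := hbdd σ
  obtain ⟨M2, hM2⟩ := hbdd (fun i => if i ∈ S then σ i else !σ i)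
  obtain ⟨M3, hM3⟩ := hbddΦ σ
  obtain ⟨M4, hM4⟩ := hbddΦ (fun i => if i ∈ S then !σ i else σ i)
  refine ⟨l / 2 * (M1 + M2) + 1 / 2 * (M3 + M4), ?_⟩
  rintro - ⟨h, hh, rfl⟩
  have hP : (1 / m : ℝ) * ∑ i, (if σ i then (1 : ℝ) else -1) * h (x i) ≤ M1 :=
    hM1 ⟨h, hh, rfl⟩
  have hQ : (1 / m : ℝ) * ∑ i, (if (if i ∈ S then σ i else !σ i) then (1 : ℝ) else -1)
      * h (x i) ≤ M2 := hM2 ⟨h, hh, rfl⟩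
  have hR : (1 / m : ℝ) * ∑ i, (if σ i then (1 : ℝ) else -1) * Φ (h (x i)) ≤ M3 :=
    hM3 ⟨h, hh, rfl⟩
  have hT : (1 / m : ℝ) * ∑ i, (if (if i ∈ S then !σ i else σ i) then (1 : ℝ) else -1)
      * Φ (h (x i)) ≤ M4 := hM4 ⟨h, hh, rfl⟩
  have hterm : ∀ i : Fin m,
      (if σ i then (1 : ℝ) else -1) * (if i ∈ S then l * h (x i) else Φ (h (x i)))
      = l / 2 * ((if σ i then (1 : ℝ) else -1) * h (x i)
          + (if (if i ∈ S then σ i else !σ i) then (1 : ℝ) else -1) * h (x i))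
        + 1 / 2 * ((if σ i then (1 : ℝ) else -1) * Φ (h (x i))
          + (if (if i ∈ S then !σ i else σ i) then (1 : ℝ) else -1) * Φ (h (x i))) := by
    intro i
    by_cases hiS : i ∈ S <;> cases hσ : σ i <;> simp [hiS, hσ] <;> ring
  have heq : gAux m x Φ l S σ h
      = l / 2 * ((1 / m : ℝ) * ∑ i, (if σ i then (1 : ℝ) else -1) * h (x i)
          + (1 / m : ℝ) * ∑ i, (if (if i ∈ S then σ i else !σ i) then (1 : ℝ) else -1)
              * h (x i))
        + 1 / 2 * ((1 / m : ℝ) * ∑ i, (if σ i then (1 : ℝ) else -1) * Φ (h (x i))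
          + (1 / m : ℝ) * ∑ i, (if (if i ∈ S then !σ i else σ i) then (1 : ℝ) else -1)
              * Φ (h (x i))) := by
    unfold gAux
    rw [Finset.sum_congr rfl (fun i _ => hterm i)]
    rw [Finset.sum_add_distrib, ← Finset.mul_sum, ← Finset.mul_sum,
      Finset.sum_add_distrib, Finset.sum_add_distrib]
    ring
  rw [heq]
  have h1 : l * ((1 / m : ℝ) * ∑ i, (if σ i then (1 : ℝ) else -1) * h (x i)
      + (1 / m : ℝ) * ∑ i, (if (if i ∈ S then σ i else !σ i) then (1 : ℝ) else -1) * h (x i))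
      ≤ l * (M1 + M2) := mul_le_mul_of_nonneg_left (by linarith) hl0
  linarith

theorem rademacher_contraction
    {X : Type*} (m : ℕ) (x : Fin m → X) (H : Set (X → ℝ)) (Φ : ℝ → ℝ) (l : ℝ)
    (hΦ : ∀ a b : ℝ, |Φ a - Φ b| ≤ l * |a - b|)
    (hH : H.Nonempty)
    (hbdd : ∀ σ : Fin m → Bool, BddAbove ((fun h : X → ℝ =>
      (1 / m : ℝ) * ∑ i, (if σ i then (1 : ℝ) else -1) * h (x i)) '' H))
    (hbddΦ : ∀ σ : Fin m → Bool, BddAbove ((fun h : X → ℝ =>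
      (1 / m : ℝ) * ∑ i, (if σ i then (1 : ℝ) else -1) * Φ (h (x i))) '' H)) :
    Rhat m x ((fun h : X → ℝ => Φ ∘ h) '' H) ≤ l * Rhat m x H := by
  classical
  have hl0 : 0 ≤ l := by
    have h01 := hΦ 0 1
    have habs : |(0 : ℝ) - 1| = 1 := by norm_num
    rw [habs, mul_one] at h01
    exact le_trans (abs_nonneg _) h01
  have hbddg : ∀ (S : Finset (Fin m)) (σ : Fin m → Bool),
      BddAbove (gAux m x Φ l S σ '' H) := gAux_bdd m x H Φ l hl0 hbdd hbddΦ
  -- one-coordinate step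
  have hstep : ∀ (S : Finset (Fin m)) (k : Fin m), k ∉ S →
      (∑ σ : Fin m → Bool, sSup (gAux m x Φ l S σ '' H))
        ≤ ∑ σ : Fin m → Bool, sSup (gAux m x Φ l (insert k S) σ '' H) := by
    intro S k hk
    have hinv : Function.Involutive
        (fun σ : Fin m → Bool => Function.update σ k (!σ k)) := by
      intro σ; funext i
      rcases eq_or_ne i k with rfl | hik
      · simp
      · simp [Function.update_of_ne hik]
    set e : Equiv.Perm (Fin m → Bool) := hinv.toPerm _ with he
    have hpair : ∀ σ : Fin m → Bool,
        sSup (gAux m x Φ l S σ '' H)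
          + sSup (gAux m x Φ l S (Function.update σ k (!σ k)) '' H)
        ≤ sSup (gAux m x Φ l (insert k S) σ '' H)
          + sSup (gAux m x Φ l (insert k S) (Function.update σ k (!σ k)) '' H) := by
      intro σ
      -- notation
      have hcongS : ∀ h : X → ℝ,
          (∑ i ∈ univ.erase k, (if Function.update σ k (!σ k) i then (1 : ℝ) else -1) *
            (if i ∈ S then l * h (x i) else Φ (h (x i))))
          = ∑ i ∈ univ.erase k, (if σ i then (1 : ℝ) else -1) *
            (if i ∈ S then l * h (x i) else Φ (h (x i))) := by
        intro h
        refine Finset.sum_congr rfl fun i hi => ?_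
        rw [Function.update_of_ne (Finset.ne_of_mem_erase hi)]
      have hcongS' : ∀ (τ : Fin m → Bool) (h : X → ℝ),
          (∑ i ∈ univ.erase k, (if τ i then (1 : ℝ) else -1) *
            (if i ∈ insert k S then l * h (x i) else Φ (h (x i))))
          = ∑ i ∈ univ.erase k, (if τ i then (1 : ℝ) else -1) *
            (if i ∈ S then l * h (x i) else Φ (h (x i))) := by
        intro τ h
        refine Finset.sum_congr rfl fun i hi => ?_
        have hik := Finset.ne_of_mem_erase hi
        simp [Finset.mem_insert, hik]
      have E1 : gAux m x Φ l S σ = fun h =>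
          ((1 / m : ℝ) * ∑ i ∈ univ.erase k, (if σ i then (1 : ℝ) else -1) *
            (if i ∈ S then l * h (x i) else Φ (h (x i))))
          + ((1 / m : ℝ) * (if σ k then (1 : ℝ) else -1)) * Φ (h (x k)) := by
        funext h
        unfold gAux
        rw [← Finset.sum_erase_add univ _ (mem_univ k), if_neg hk]
        ring
      have E2 : gAux m x Φ l S (Function.update σ k (!σ k)) = fun h =>
          ((1 / m : ℝ) * ∑ i ∈ univ.erase k, (if σ i then (1 : ℝ) else -1) *
            (if i ∈ S then l * h (x i) else Φ (h (x i))))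
          - ((1 / m : ℝ) * (if σ k then (1 : ℝ) else -1)) * Φ (h (x k)) := by
        funext h
        unfold gAux
        rw [← Finset.sum_erase_add univ _ (mem_univ k), hcongS h, if_neg hk,
          Function.update_self]
        cases hσk : σ k <;> simp <;> ring
      have E3 : gAux m x Φ l (insert k S) σ = fun h =>
          ((1 / m : ℝ) * ∑ i ∈ univ.erase k, (if σ i then (1 : ℝ) else -1) *
            (if i ∈ S then l * h (x i) else Φ (h (x i))))
          + ((1 / m : ℝ) * (if σ k then (1 : ℝ) else -1)) * l * h (x k) := by
        funext h
        unfold gAux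
        rw [← Finset.sum_erase_add univ _ (mem_univ k), hcongS' σ h,
          if_pos (Finset.mem_insert_self k S)]
        ring
      have E4 : gAux m x Φ l (insert k S) (Function.update σ k (!σ k)) = fun h =>
          ((1 / m : ℝ) * ∑ i ∈ univ.erase k, (if σ i then (1 : ℝ) else -1) *
            (if i ∈ S then l * h (x i) else Φ (h (x i))))
          - ((1 / m : ℝ) * (if σ k then (1 : ℝ) else -1)) * l * h (x k) := by
        funext h
        unfold gAux
        rw [← Finset.sum_erase_add univ _ (mem_univ k), hcongS' _ h, hcongS h,
          if_pos (Finset.mem_insert_self k S), Function.update_self]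
        cases hσk : σ k <;> simp <;> ring
      rw [E1, E2, E3, E4]
      exact step_key' hH Φ l hl0 hΦ
        ((1 / m : ℝ) * (if σ k then (1 : ℝ) else -1))
        (fun h => (1 / m : ℝ) * ∑ i ∈ univ.erase k, (if σ i then (1 : ℝ) else -1) *
          (if i ∈ S then l * h (x i) else Φ (h (x i))))
        (fun h => h (x k))
        (E3 ▸ hbddg (insert k S) σ)
        (E4 ▸ hbddg (insert k S) (Function.update σ k (!σ k)))
    -- pair up σ with its flip at k
    have hsum : ∀ T : Finset (Fin m),
        (∑ σ : Fin m → Bool, sSup (gAux m x Φ l T σ '' H))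
        = (1 / 2 : ℝ) * ∑ σ : Fin m → Bool,
            (sSup (gAux m x Φ l T σ '' H)
              + sSup (gAux m x Φ l T (Function.update σ k (!σ k)) '' H)) := by
      intro T
      rw [Finset.sum_add_distrib]
      have := Equiv.sum_comp e (fun σ => sSup (gAux m x Φ l T σ '' H))
      simp only [he, Function.Involutive.coe_toPerm] at this
      rw [this]
      ring
    rw [hsum S, hsum (insert k S)]
    have hle : (∑ σ : Fin m → Bool,
        (sSup (gAux m x Φ l S σ '' H)
          + sSup (gAux m x Φ l S (Function.update σ k (!σ k)) '' H)))
        ≤ ∑ σ : Fin m → Bool,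
        (sSup (gAux m x Φ l (insert k S) σ '' H)
          + sSup (gAux m x Φ l (insert k S) (Function.update σ k (!σ k)) '' H)) :=
      Finset.sum_le_sum fun σ _ => hpair σ
    linarith
  -- induct from ∅ to univ
  have hmono : ∀ S : Finset (Fin m),
      (∑ σ : Fin m → Bool, sSup (gAux m x Φ l ∅ σ '' H))
        ≤ ∑ σ : Fin m → Bool, sSup (gAux m x Φ l S σ '' H) := by
    intro S
    induction S using Finset.induction_on with
    | empty => exact le_refl _
    | insert _ _ hk ih => exact le_trans ih (hstep _ _ hk)
  -- identify the endpoints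
  have hL : Rhat m x ((fun h : X → ℝ => Φ ∘ h) '' H)
      = (1 / 2 ^ m : ℝ) * ∑ σ : Fin m → Bool, sSup (gAux m x Φ l ∅ σ '' H) := by
    unfold Rhat
    congr 1
    refine Finset.sum_congr rfl fun σ _ => ?_
    congr 1
    rw [Set.image_image]
    exact Set.image_congr fun h _ => by simp [gAux]
  have hRuniv : (∑ σ : Fin m → Bool, sSup (gAux m x Φ l univ σ '' H))
      = l * ∑ σ : Fin m → Bool, sSup ((fun h : X → ℝ =>
          (1 / m : ℝ) * ∑ i, (if σ i then (1 : ℝ) else -1) * h (x i)) '' H) := by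
    rw [Finset.mul_sum]
    refine Finset.sum_congr rfl fun σ _ => ?_
    have himg : gAux m x Φ l univ σ '' H
        = l • ((fun h : X → ℝ =>
            (1 / m : ℝ) * ∑ i, (if σ i then (1 : ℝ) else -1) * h (x i)) '' H) := by
      rw [← Set.image_smul, Set.image_image]
      refine Set.image_congr fun h _ => ?_
      simp only [gAux, Finset.mem_univ, if_true, smul_eq_mul]
      rw [Finset.mul_sum, Finset.mul_sum, Finset.mul_sum]
      exact Finset.sum_congr rfl fun i _ => by ring
    rw [himg, Real.sSup_smul_of_nonneg hl0, smul_eq_mul]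
  rw [hL]
  unfold Rhat
  have hfinal := hmono univ
  rw [hRuniv] at hfinal
  calc (1 / 2 ^ m : ℝ) * ∑ σ : Fin m → Bool, sSup (gAux m x Φ l ∅ σ '' H)
      ≤ (1 / 2 ^ m : ℝ) * (l * ∑ σ : Fin m → Bool, sSup ((fun h : X → ℝ =>
          (1 / m : ℝ) * ∑ i, (if σ i then (1 : ℝ) else -1) * h (x i)) '' H)) :=
        mul_le_mul_of_nonneg_left hfinal (by positivity)
    _ = l * ((1 / 2 ^ m : ℝ) * ∑ σ : Fin m → Bool, sSup ((fun h : X → ℝ =>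
          (1 / m : ℝ) * ∑ i, (if σ i then (1 : ℝ) else -1) * h (x i)) '' H)) := by ring
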